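/- Let β^(2) = (β_{ij})_{0≤i+j≤2} be a real sequence whose 3×3 moment matrix M(1) is positive definite. Then M(1) admits a flat extension M(2), and consequently β^(2) admits a representing measure consisting of exactly 3 atoms. -/

import Mathlib

/-- Index set for the moment matrix of degree `n`:
pairs `(i,j)` of nonnegative integers with `i + j ≤ n`. -/
abbrev MIdx (n : ℕ) := {ij : Fin (n+1) × Fin (n+1) // (ij.1 : ℕ) + (ij.2 : ℕ) ≤ n}

/-- The moment matrix `M(n)` of a real sequence `β = (β_{ij})`:
`M(n)[(i,j),(k,l)] = β_{i+k, j+l}`. -/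
def momentMatrix (n : ℕ) (β : ℕ → ℕ → ℝ) : Matrix (MIdx n) (MIdx n) ℝ :=
  fun p q => β ((p.val.1 : ℕ) + (q.val.1 : ℕ)) ((p.val.2 : ℕ) + (q.val.2 : ℕ))
def e00 : MIdx 1 := ⟨(0,0), by decide⟩
def e10 : MIdx 1 := ⟨(1,0), by decide⟩
def e01 : MIdx 1 := ⟨(0,1), by decide⟩

lemma univ_MIdx1 : (Finset.univ : Finset (MIdx 1)) = {e00, e10, e01} := by decide

lemma sum_MIdx1 (f : MIdx 1 → ℝ) : ∑ p, f p = f e00 + f e10 + f e01 := by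
  rw [univ_MIdx1, Finset.sum_insert (by decide), Finset.sum_insert (by decide),
    Finset.sum_singleton, add_assoc]

open Matrix in
lemma quad1 (M : Matrix (MIdx 1) (MIdx 1) ℝ) (w : MIdx 1 → ℝ) :
    dotProduct w (M.mulVec w) =
      w e00 * (M e00 e00 * w e00 + M e00 e10 * w e10 + M e00 e01 * w e01)
      + w e10 * (M e10 e00 * w e00 + M e10 e10 * w e10 + M e10 e01 * w e01)
      + w e01 * (M e01 e00 * w e00 + M e01 e10 * w e10 + M e01 e01 * w e01) := by
  simp only [dotProduct, Matrix.mulVec, sum_MIdx1]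

example (β : ℕ → ℕ → ℝ) : momentMatrix 1 β e10 e01 = β 1 1 := rfl


lemma ne1 : e10 ≠ e00 := by decide
lemma ne2 : e01 ≠ e00 := by decide
lemma ne3 : e01 ≠ e10 := by decide

lemma b00_pos (β : ℕ → ℕ → ℝ) (hpd : (momentMatrix 1 β).PosDef) : 0 < β 0 0 := by
  have h := hpd.dotProduct_mulVec_pos (x := fun p => if p = e00 then 1 else 0)
    (by
      intro h
      have := congrFun h e00
      simp at this)
  rw [show star (fun p => if p = e00 then (1:ℝ) else 0) = (fun p => if p = e00 then (1:ℝ) else 0) by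
    simp [Pi.star_def]] at h
  rw [quad1] at h
  simp [ne1, ne2] at h
  exact h

lemma key_pos (β : ℕ → ℕ → ℝ) (hpd : (momentMatrix 1 β).PosDef) (s t : ℝ)
    (hst : s ≠ 0 ∨ t ≠ 0) :
    0 < (β 0 0 * β 2 0 - β 1 0^2) * s^2 + 2*(β 0 0 * β 1 1 - β 1 0 * β 0 1) * s * t
      + (β 0 0 * β 0 2 - β 0 1^2) * t^2 := by
  have hb := b00_pos β hpd
  set w : MIdx 1 → ℝ := fun p =>
    if p = e00 then -(s * β 1 0 + t * β 0 1) else if p = e10 then s * β 0 0 else t * β 0 0 with hw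
  have hval : w e00 = -(s * β 1 0 + t * β 0 1) := by simp [hw]
  have hval2 : w e10 = s * β 0 0 := by simp [hw, ne1]
  have hval3 : w e01 = t * β 0 0 := by simp [hw, ne2, ne3]
  have hne : w ≠ 0 := by
    intro h
    rcases hst with hs | ht
    · have := congrFun h e10
      rw [hval2] at this
      rcases mul_eq_zero.mp this with h | h
      · exact hs h
      · exact hb.ne' h
    · have := congrFun h e01
      rw [hval3] at this
      rcases mul_eq_zero.mp this with h | h
      · exact ht h
      · exact hb.ne' h
  have h := hpd.dotProduct_mulVec_pos (x := w) hne
  rw [show star w = w from funext fun p => star_trivial _] at h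
  rw [quad1] at h
  rw [hval, hval2, hval3] at h
  have e1 : momentMatrix 1 β e00 e00 = β 0 0 := rfl
  have e2 : momentMatrix 1 β e00 e10 = β 1 0 := rfl
  have e3 : momentMatrix 1 β e00 e01 = β 0 1 := rfl
  have e4 : momentMatrix 1 β e10 e00 = β 1 0 := rfl
  have e5 : momentMatrix 1 β e10 e10 = β 2 0 := rfl
  have e6 : momentMatrix 1 β e10 e01 = β 1 1 := rfl
  have e7 : momentMatrix 1 β e01 e00 = β 0 1 := rfl
  have e8 : momentMatrix 1 β e01 e10 = β 1 1 := rfl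
  have e9 : momentMatrix 1 β e01 e01 = β 0 2 := rfl
  rw [e1, e2, e3, e4, e5, e6, e7, e8, e9] at h
  nlinarith [h, hb, sq_nonneg s, sq_nonneg t]

set_option maxHeartbeats 1000000 in
lemma exists_measure (β : ℕ → ℕ → ℝ) (hpd : (momentMatrix 1 β).PosDef) :
    ∃ x y ρ : Fin 3 → ℝ,
      Function.Injective (fun k => (x k, y k)) ∧
      (∀ k, 0 < ρ k) ∧
      (∀ i j : ℕ, i + j ≤ 2 → β i j = ∑ k, ρ k * x k ^ i * y k ^ j) := by
  have hb := b00_pos β hpd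
  have hP : 0 < β 0 0 * β 2 0 - β 1 0^2 := by
    have h := key_pos β hpd 1 0 (Or.inl one_ne_zero); nlinarith [h]
  have hPR : 0 < (β 0 0 * β 2 0 - β 1 0^2) * (β 0 0 * β 0 2 - β 0 1^2)
      - (β 0 0 * β 1 1 - β 1 0 * β 0 1)^2 := by
    have h := key_pos β hpd (β 0 0 * β 1 1 - β 1 0 * β 0 1)
      (-(β 0 0 * β 2 0 - β 1 0^2)) (Or.inr (by intro h; apply hP.ne'; linarith))
    nlinarith [h, hP]
  obtain ⟨A, hA, hA2⟩ : ∃ A : ℝ, 0 < A ∧ A^2 = 2*(β 0 0 * β 2 0 - β 1 0^2) :=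
    ⟨Real.sqrt (2*(β 0 0 * β 2 0 - β 1 0^2)), Real.sqrt_pos.mpr (by linarith),
      Real.sq_sqrt (by linarith)⟩
  obtain ⟨F, hF, hF2⟩ : ∃ F : ℝ, 0 < F ∧ 2*(β 0 0 * β 2 0 - β 1 0^2)*F^2 =
      3*((β 0 0 * β 2 0 - β 1 0^2) * (β 0 0 * β 0 2 - β 0 1^2)
        - (β 0 0 * β 1 1 - β 1 0 * β 0 1)^2) := by
    refine ⟨Real.sqrt (3*((β 0 0 * β 2 0 - β 1 0^2) * (β 0 0 * β 0 2 - β 0 1^2)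
        - (β 0 0 * β 1 1 - β 1 0 * β 0 1)^2) / (2*(β 0 0 * β 2 0 - β 1 0^2))),
      Real.sqrt_pos.mpr (by positivity), ?_⟩
    rw [Real.sq_sqrt (by positivity)]
    field_simp
  have hbne : β 0 0 ≠ 0 := hb.ne'
  have hAne : A ≠ 0 := hA.ne'
  refine ⟨![(A + β 1 0)/(β 0 0), (2*β 1 0 - A)/(2*β 0 0), (2*β 1 0 - A)/(2*β 0 0)],
    ![(2*(β 0 0 * β 1 1 - β 1 0 * β 0 1)/A + β 0 1)/(β 0 0),
      (β 0 1 - (β 0 0 * β 1 1 - β 1 0 * β 0 1)/A + F)/(β 0 0),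
      (β 0 1 - (β 0 0 * β 1 1 - β 1 0 * β 0 1)/A - F)/(β 0 0)],
    fun _ => β 0 0/3, ?_, fun _ => by positivity, ?_⟩
  · intro k l h
    simp only [Prod.mk.injEq] at h
    obtain ⟨h1, h2⟩ := h
    fin_cases k <;> fin_cases l <;>
        simp only [Fin.zero_eta, Fin.mk_one, Fin.reduceFinMk, Matrix.cons_val_zero, Matrix.cons_val_one,
          Matrix.head_cons, Matrix.cons_val_two, Matrix.tail_cons] at h1 h2 <;>
      [rfl;
       (exfalso; field_simp at h1; nlinarith [mul_pos hA hb]);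
       (exfalso; field_simp at h1; nlinarith [mul_pos hA hb]);
       (exfalso; field_simp at h1; nlinarith [mul_pos hA hb]);
       rfl;
       (exfalso; field_simp at h2; nlinarith [mul_pos (mul_pos hF hA) hb, mul_pos hF hb, mul_pos hF hA]);
       (exfalso; field_simp at h1; nlinarith [mul_pos hA hb]);
       (exfalso; field_simp at h2; nlinarith [mul_pos (mul_pos hF hA) hb, mul_pos hF hb, mul_pos hF hA]);
       rfl]
  · intro i j hij
    rw [Fin.sum_univ_three]
    simp only [Matrix.cons_val_zero, Matrix.cons_val_one, Matrix.head_cons,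
      Matrix.cons_val_two, Matrix.tail_cons]
    have hi : i ≤ 2 := by omega
    interval_cases i <;>
        [(have hj : j ≤ 2 := by omega); (have hj : j ≤ 1 := by omega);
         (have hj : j ≤ 0 := by omega)] <;>
      interval_cases j
    · -- (0,0)
      field_simp
      ring
    · -- (0,1)
      field_simp
      ring
    · -- (0,2)
      field_simp
      linear_combination (-(2*F^2 - 3*(β 0 0 * β 0 2 - β 0 1^2))) * hA2
        - 2 * hF2
    · -- (1,0)
      field_simp
      ring
    · -- (1,1)
      field_simp
      ring
    · -- (2,0)
      field_simp
      linear_combination (-6) * hA2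

open Matrix

noncomputable def iota : MIdx 1 → MIdx 2 := fun a =>
  ⟨(⟨(a.1.1 : ℕ), lt_of_lt_of_le a.1.1.isLt (by norm_num)⟩,
    ⟨(a.1.2 : ℕ), lt_of_lt_of_le a.1.2.isLt (by norm_num)⟩), a.2.trans one_le_two⟩


set_option maxHeartbeats 1000000 in
/-- If the 3×3 moment matrix `M(1)` of a real sequence `β^(2)` is
positive definite, then `M(1)` admits a flat extension `M(2)`, and consequently
`β^(2)` admits a representing measure consisting of exactly 3 atoms. -/
theorem posDef_M1_has_flat_extension_and_three_atomic_measure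
    (β : ℕ → ℕ → ℝ)
    (hpd : (momentMatrix 1 β).PosDef) :
    (∃ β' : ℕ → ℕ → ℝ,
      (∀ i j : ℕ, i + j ≤ 2 → β' i j = β i j) ∧
      (momentMatrix 2 β').PosSemidef ∧
      (momentMatrix 2 β').rank = (momentMatrix 1 β).rank) ∧
    (∃ x y ρ : Fin 3 → ℝ,
      Function.Injective (fun k => (x k, y k)) ∧
      (∀ k, 0 < ρ k) ∧
      (∀ i j : ℕ, i + j ≤ 2 → β i j = ∑ k, ρ k * x k ^ i * y k ^ j)) := by
  obtain ⟨x, y, ρ, hinj, hρ, hrep⟩ := exists_measure β hpd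
  set β' : ℕ → ℕ → ℝ := fun i j => ∑ k, ρ k * x k ^ i * y k ^ j with hβ'
  have hagree : ∀ i j : ℕ, i + j ≤ 2 → β' i j = β i j := fun i j hij => (hrep i j hij).symm
  set V : Matrix (Fin 3) (MIdx 2) ℝ :=
    fun k p => x k ^ ((p.1.1 : ℕ)) * y k ^ ((p.1.2 : ℕ)) with hV
  have hfac : momentMatrix 2 β' = Vᴴ * Matrix.diagonal ρ * V := by
    ext p q
    simp only [Matrix.mul_apply, Matrix.conjTranspose_apply]
    simp [momentMatrix, Matrix.mul_apply, Matrix.diagonal_apply, Matrix.conjTranspose_apply,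
      Fin.sum_univ_three, hβ', hV, pow_add]
    ring
  have hpsd : (momentMatrix 2 β').PosSemidef := by
    rw [hfac]
    exact (Matrix.PosSemidef.diagonal (fun k => (hρ k).le)).conjTranspose_mul_mul_same V
  set E : Matrix (MIdx 2) (MIdx 1) ℝ := fun p a => if p = iota a then 1 else 0 with hE
  have hsub : momentMatrix 1 β = Eᵀ * (momentMatrix 2 β' * E) := by
    ext a c
    have h1 : (Eᵀ * (momentMatrix 2 β' * E)) a c = momentMatrix 2 β' (iota a) (iota c) := by
      simp only [Matrix.mul_apply, Matrix.transpose_apply]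
      simp [Matrix.mul_apply, hE, Matrix.transpose_apply, ite_mul, mul_ite,
        Finset.sum_ite_eq, Finset.sum_ite_eq']
    rw [h1]
    have h2 : momentMatrix 2 β' (iota a) (iota c) =
        β' ((a.1.1 : ℕ) + (c.1.1 : ℕ)) ((a.1.2 : ℕ) + (c.1.2 : ℕ)) := rfl
    rw [h2, hagree _ _ (by have := a.2; have := c.2; omega)]
    rfl
  have hcard : Fintype.card (MIdx 1) = 3 := by decide
  have hrank1 : (momentMatrix 1 β).rank = 3 := by
    rw [Matrix.rank_of_isUnit _ hpd.isUnit, hcard]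
  have hle1 : (momentMatrix 1 β).rank ≤ (momentMatrix 2 β').rank := by
    rw [hsub]
    exact le_trans (Matrix.rank_mul_le_right _ _) (Matrix.rank_mul_le_left _ _)
  have hle2 : (momentMatrix 2 β').rank ≤ 3 := by
    rw [hfac, Matrix.mul_assoc]
    exact le_trans (Matrix.rank_mul_le_right _ _)
      (le_trans (Matrix.rank_le_card_height _) (by simp))
  exact ⟨⟨β', hagree, hpsd, by omega⟩, ⟨x, y, ρ, hinj, hρ, hrep⟩⟩
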